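/- σ-immanence theorem (converse direction): let Ω be a set and σ: Ω × Ω → ℝ satisfy σ(P,P) = 0 and σ(P,Q) = σ(Q,P) for all P, Q. Define the scalar product (P₀P₁.Q₀Q₁) := σ(P₀,Q₁) + σ(P₁,Q₀) − σ(P₀,Q₀) − σ(P₁,Q₁). Suppose there exist points P₀, P₁, …, P_n ∈ Ω such that: (II) the n×n Gram matrix G with G_{il} = (P₀P_i.P₀P_l) is nonsingular, and for every k > n and all points Q₀,…,Q_k ∈ Ω the corresponding (k×k) Gram determinant vanishes; (III) for all P, Q ∈ Ω, σ(P,Q) = ½ Σ_{i,k=1}^{n} (G⁻¹)_{ik}(x_i(P) − x_i(Q))(x_k(P) − x_k(Q)), where x_i(P) = (P₀P_i.P₀P); (IV) G is positive definite; (V) the map P ↦ (x_1(P),…,x_n(P)) is a bijection from Ω onto ℝⁿ. Then (Ω, σ) is the n-dimensional proper Euclidean space: there exists a bijection f: Ω → EuclideanSpace ℝ (Fin n) such that σ(P,Q) = ½‖f(P) − f(Q)‖² for all P, Q ∈ Ω. -/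

import Mathlib

open Matrix in
/-- σ-immanence theorem (converse direction): a σ-space whose world function satisfies
conditions II–V is the n-dimensional proper Euclidean space. -/
theorem sigma_immanence_converse (n : ℕ) (Ω : Type*) (σ : Ω → Ω → ℝ)
    (hzero : ∀ P : Ω, σ P P = 0) (hsymm : ∀ P Q : Ω, σ P Q = σ Q P)
    -- the σ-immanent scalar product (P₀P₁.Q₀Q₁)
    (sp : Ω → Ω → Ω → Ω → ℝ)
    (hsp : ∀ P₀ P₁ Q₀ Q₁ : Ω,
      sp P₀ P₁ Q₀ Q₁ = σ P₀ Q₁ + σ P₁ Q₀ - σ P₀ Q₀ - σ P₁ Q₁)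
    -- the distinguished points P₀, P₁, …, P_n and their Gram matrix G
    (P₀ : Ω) (P : Fin n → Ω) (G : Matrix (Fin n) (Fin n) ℝ)
    (hG : G = Matrix.of fun i l : Fin n => sp P₀ (P i) P₀ (P l))
    -- covariant coordinates x_i(P) = (P₀P_i.P₀P)
    (x : Ω → Fin n → ℝ) (hx : ∀ (R : Ω) (i : Fin n), x R i = sp P₀ (P i) P₀ R)
    -- condition II: G nonsingular, and all larger Gram determinants vanish
    (hII₁ : IsUnit G.det)
    (hII₂ : ∀ k : ℕ, k > n → ∀ Q₀ : Ω, ∀ Q : Fin k → Ω,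
      (Matrix.of fun i l : Fin k => sp Q₀ (Q i) Q₀ (Q l)).det = 0)
    -- condition III: linear structure
    (hIII : ∀ Pa Qa : Ω, σ Pa Qa =
      (1 / 2) * ∑ i : Fin n, ∑ k : Fin n,
        G⁻¹ i k * (x Pa i - x Qa i) * (x Pa k - x Qa k))
    -- condition IV: G positive definite
    (hIV : G.PosDef)
    -- condition V: the coordinate map is a bijection onto ℝⁿ
    (hV : Function.Bijective x) :
    ∃ f : Ω → EuclideanSpace ℝ (Fin n),
      Function.Bijective f ∧ ∀ Pa Qa : Ω, σ Pa Qa = ‖f Pa - f Qa‖ ^ 2 / 2 := by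
    classical
  have hHpd : (G⁻¹).PosDef := hIV.inv
  set H := G⁻¹ with hHdef
  open scoped MatrixOrder in
  set A := CFC.sqrt H with hAdef
  open scoped MatrixOrder in
  have hApsd : A.PosSemidef := (CFC.sqrt_nonneg H).posSemidef
  have hAsymm : Aᵀ = A := by
    have := hApsd.isHermitian
    simpa [Matrix.IsHermitian, Matrix.conjTranspose_eq_transpose_of_trivial] using this
  open scoped MatrixOrder in
  have hAA : A * A = H := CFC.sqrt_mul_sqrt_self H hHpd.posSemidef.nonneg
  have hAunit : IsUnit A.det := by
    have hHunit : IsUnit H.det := isUnit_iff_ne_zero.mpr (ne_of_gt hHpd.det_pos)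
    have : A.det * A.det = H.det := by rw [← Matrix.det_mul, hAA]
    exact isUnit_of_mul_isUnit_left (this ▸ hHunit)
  set e := (WithLp.equiv 2 (Fin n → ℝ)).symm with hedef
  refine ⟨fun R => e (A.mulVec (x R)), ?_, ?_⟩
  · have hm : Function.Bijective (A.mulVec) := by
      have := A.invertibleOfIsUnitDet hAunit
      exact ⟨A.mulVec_injective_of_invertible, A.mulVec_surjective_of_invertible⟩
    exact ((WithLp.equiv 2 (Fin n → ℝ)).symm.bijective.comp hm).comp hV
  · intro Pa Qa
    have key : ∀ v : Fin n → ℝ,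
        (A.mulVec v) ⬝ᵥ (A.mulVec v) = v ⬝ᵥ H.mulVec v := by
      intro v
      rw [dotProduct_mulVec, ← Matrix.mulVec_transpose, hAsymm,
        Matrix.mulVec_mulVec, hAA, dotProduct_comm, dotProduct_mulVec,
        ← Matrix.mulVec_transpose]
    have hnormsq : ∀ y : EuclideanSpace ℝ (Fin n), ‖y‖ ^ 2 = ∑ i, y i ^ 2 := by
      intro y
      rw [EuclideanSpace.norm_eq, Real.sq_sqrt (by positivity)]
      simp [Real.norm_eq_abs, sq_abs]
    have hsub : e (A.mulVec (x Pa)) - e (A.mulVec (x Qa)) = e (A.mulVec (x Pa - x Qa)) := by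
      rw [Matrix.mulVec_sub]
      rfl
    simp only []
    rw [hsub, hnormsq]
    calc σ Pa Qa = (x Pa - x Qa) ⬝ᵥ H.mulVec (x Pa - x Qa) / 2 := by
          rw [hIII Pa Qa]
          simp only [dotProduct, Matrix.mulVec, Pi.sub_apply, ← hHdef]
          rw [Finset.mul_sum, Finset.sum_div]
          refine Finset.sum_congr rfl fun i _ => ?_
          rw [Finset.mul_sum, Finset.mul_sum, Finset.sum_div]
          refine Finset.sum_congr rfl fun k _ => ?_
          ring
      _ = (A.mulVec (x Pa - x Qa)) ⬝ᵥ (A.mulVec (x Pa - x Qa)) / 2 := by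
          rw [key]
      _ = (∑ i, (e (A.mulVec (x Pa - x Qa)) i) ^ 2) / 2 := by
          simp [dotProduct, sq, hedef]
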